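/- Every separable Banach space over ℝ has the countable separation property (CSP). -/

import Mathlib

open Set Cardinal Pointwise

set_option maxHeartbeats 1000000

/-- A Banach space `X` over `ℝ` has the countable separation property (CSP) if every set of
continuous linear functionals separating the points of `X` has a countable separating subset. -/
def HasCSP (X : Type*) [NormedAddCommGroup X] [NormedSpace ℝ X] : Prop :=
  ∀ F : Set (X →L[ℝ] ℝ),
    (∀ x : X, x ≠ 0 → ∃ f ∈ F, f x ≠ 0) →
    ∃ F₀ : Set (X →L[ℝ] ℝ), F₀ ⊆ F ∧ F₀.Countable ∧
      ∀ x : X, x ≠ 0 → ∃ f ∈ F₀, f x ≠ 0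

/-- Every separable Banach space over `ℝ` has CSP. -/
theorem separable_hasCSP (X : Type*) [NormedAddCommGroup X] [NormedSpace ℝ X]
    [CompleteSpace X] [TopologicalSpace.SeparableSpace X] : HasCSP X := by
  classical
  intro F hF
  obtain ⟨D, hDc, hDd⟩ := TopologicalSpace.exists_countable_dense X
  set P : X → ℕ → ℕ → (X →L[ℝ] ℝ) → Prop := fun d n m f =>
    f ∈ F ∧ ‖f‖ ≤ (n : ℝ) ∧ 1 / (m : ℝ) ≤ |f d| with hP
  set g : X → ℕ → ℕ → (X →L[ℝ] ℝ) := fun d n m =>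
    if h : ∃ f, P d n m f then h.choose else 0 with hg
  refine ⟨(fun p : X × ℕ × ℕ => g p.1 p.2.1 p.2.2) '' (D ×ˢ ((Set.univ : Set ℕ) ×ˢ (Set.univ : Set ℕ))) ∩ F,
    inter_subset_right, ((hDc.prod ((Set.countable_univ (α := ℕ)).prod (Set.countable_univ (α := ℕ)))).image _).mono
      inter_subset_left, ?_⟩
  intro x hx
  obtain ⟨f, hfF, hfx⟩ := hF x hx
  set ε : ℝ := |f x| with hε
  have hε0 : 0 < ε := abs_pos.mpr hfx
  set n : ℕ := ⌈‖f‖⌉₊ with hn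
  set m : ℕ := ⌈2 / ε⌉₊ with hm
  have hm0 : (0 : ℝ) < m := by
    have : 0 < 2 / ε := by positivity
    exact_mod_cast Nat.ceil_pos.mpr this
  have hmε : 2 / (m : ℝ) ≤ ε := by
    rw [div_le_iff₀ hm0]
    have h1 : 2 / ε ≤ (m : ℝ) := Nat.le_ceil _
    calc (2 : ℝ) = (2 / ε) * ε := by field_simp
    _ ≤ (m : ℝ) * ε := by nlinarith
    _ = ε * m := mul_comm _ _
  have hn0 : (0 : ℝ) < n := by
    have hf0 : (0 : ℝ) < ‖f‖ := by
      rcases eq_or_lt_of_le (norm_nonneg f) with h | h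
      · exfalso; apply hfx
        have : f = 0 := by rwa [eq_comm, norm_eq_zero] at h
        simp [this]
      · exact h
    exact_mod_cast Nat.ceil_pos.mpr hf0
  have hfn : ‖f‖ ≤ (n : ℝ) := Nat.le_ceil _
  set δ : ℝ := 1 / (2 * m * n) with hδ
  have hδ0 : 0 < δ := by positivity
  obtain ⟨d, hdD, hdist⟩ := hDd.exists_dist_lt x hδ0
  -- f itself witnesses P d n m
  have hfd : 1 / (m : ℝ) ≤ |f d| := by
    have h1 : |f x - f d| ≤ ‖f‖ * ‖x - d‖ := by
      calc |f x - f d| = ‖f (x - d)‖ := by rw [map_sub]; rfl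
      _ ≤ ‖f‖ * ‖x - d‖ := f.le_opNorm _
    have h2 : ‖x - d‖ < δ := by rwa [← dist_eq_norm]
    have h3 : |f x - f d| ≤ (n : ℝ) * δ := by
      calc |f x - f d| ≤ ‖f‖ * ‖x - d‖ := h1
      _ ≤ (n : ℝ) * δ := by
          apply mul_le_mul hfn h2.le (norm_nonneg _) (le_of_lt hn0)
    have h4 : (n : ℝ) * δ = 1 / (2 * m) := by
      rw [hδ]; field_simp
    have h5 : ε - 1 / (2 * m) ≤ |f d| := by
      have := abs_sub_abs_le_abs_sub (f x) (f d)
      rw [h4] at h3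
      linarith [this]
    have h6 : 1 / (m : ℝ) ≤ ε - 1 / (2 * m) := by
      have hA : (1:ℝ)/m + 1/(2*m) = 3/(2*m) := by field_simp; ring
      have hB : (3:ℝ)/(2*m) ≤ 2/m := by
        rw [div_le_div_iff₀ (by positivity) hm0]; nlinarith
      linarith [hmε]
    linarith
  have hex : ∃ f', P d n m f' := ⟨f, hfF, hfn, hfd⟩
  set f' : X →L[ℝ] ℝ := g d n m with hf'
  have hPf' : P d n m f' := by
    rw [hf', hg]; simp only [dif_pos hex]; exact hex.choose_spec
  obtain ⟨hf'F, hf'n, hf'd⟩ := hPf'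
  refine ⟨f', ⟨⟨(d, n, m), ⟨hdD, trivial, trivial⟩, rfl⟩, hf'F⟩, ?_⟩
  -- show f' x ≠ 0
  have h1 : |f' d - f' x| ≤ (n : ℝ) * δ := by
    calc |f' d - f' x| = ‖f' (d - x)‖ := by rw [map_sub]; rfl
    _ ≤ ‖f'‖ * ‖d - x‖ := f'.le_opNorm _
    _ ≤ (n : ℝ) * δ := by
        apply mul_le_mul hf'n _ (norm_nonneg _) (le_of_lt hn0)
        rw [← dist_eq_norm, dist_comm]; exact hdist.le
  have h4 : (n : ℝ) * δ = 1 / (2 * m) := by rw [hδ]; field_simp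
  have h5 : 1 / (m : ℝ) - 1 / (2 * m) ≤ |f' x| := by
    have := abs_sub_abs_le_abs_sub (f' d) (f' x)
    rw [h4] at h1
    linarith
  have h6 : (0 : ℝ) < 1 / (m : ℝ) - 1 / (2 * m) := by
    have hlt : 1 / (2*(m:ℝ)) < 1 / (m:ℝ) :=
      one_div_lt_one_div_of_lt hm0 (by linarith)
    linarith
  intro hc
  rw [hc, abs_zero] at h5
  linarith
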